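/- Let X be a Polish space and φ : X → [0,∞] a function. Define U(φ) as the pointwise infimum of all upper semi-continuous ψ : X → [0,∞] with φ ≤ ψ outside a meagre set. Then φ ≤ U(φ) outside a meagre set, and U(φ) is the least upper semi-continuous function with this property. -/

import Mathlib

open scoped ENNReal

/-- A graded subset is open iff upper semi-continuous: strict sublevel sets are open. -/
def GradedOpen {X : Type*} [TopologicalSpace X] (φ : X → ℝ≥0∞) : Prop :=
  ∀ r : ℝ≥0∞, IsOpen {x : X | φ x < r}

/-- `φ ≤* ψ`: `φ ≤ ψ` outside a meagre set. -/
def LeAE {X : Type*} [TopologicalSpace X] (φ ψ : X → ℝ≥0∞) : Prop :=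
  IsMeagre {x : X | ψ x < φ x}

/-- `U(φ)`: pointwise infimum of all u.s.c. functions `ψ` with `φ ≤* ψ`. -/
noncomputable def Ugr {X : Type*} [TopologicalSpace X] (φ : X → ℝ≥0∞) : X → ℝ≥0∞ :=
  fun x => ⨅ ψ : {ψ : X → ℝ≥0∞ // GradedOpen ψ ∧ LeAE φ ψ}, ψ.val x

/-- `φ ≤* U(φ)`, `U(φ)` is u.s.c., and `U(φ)` is the least u.s.c. function with
this property. -/
theorem Ugr_spec {X : Type*} [TopologicalSpace X] [PolishSpace X] (φ : X → ℝ≥0∞) :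
    LeAE φ (Ugr φ) ∧ GradedOpen (Ugr φ) ∧
      ∀ ψ : X → ℝ≥0∞, GradedOpen ψ → LeAE φ ψ → ∀ x, Ugr φ x ≤ ψ x := by
  classical
  refine ⟨?_, ?_, ?_⟩
  · -- LeAE φ (Ugr φ)
    -- Use second countability: a countable subfamily suffices pointwise below any level.
    set S := {ψ : X → ℝ≥0∞ // GradedOpen ψ ∧ LeAE φ ψ} with hS
    let P : Set X → ℚ → Prop := fun B q => ∃ ψ : S, ∀ y ∈ B, ψ.val y < (Real.toNNReal q : ℝ≥0∞)
    let F : Set X → ℚ → Set X := fun B q =>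
      if h : P B q then {x | (h.choose).val x < φ x} else ∅
    have hFmeagre : ∀ B q, IsMeagre (F B q) := by
      intro B q
      by_cases h : P B q
      · simpa only [F, dif_pos h, LeAE] using h.choose.2.2
      · simpa only [F, dif_neg h] using (IsMeagre.empty : IsMeagre (∅ : Set X))
    have hsub : {x | Ugr φ x < φ x} ⊆
        ⋃ p : (TopologicalSpace.countableBasis X) × ℚ, F p.1.val p.2 := by
      intro x hx
      simp only [Set.mem_setOf_eq, Ugr] at hx
      obtain ⟨ψ, hψx⟩ := iInf_lt_iff.mp hx
      obtain ⟨q, _, hq1, hq2⟩ := ENNReal.lt_iff_exists_rat_btwn.mp hψx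
      have hopen := ψ.2.1 (Real.toNNReal q : ℝ≥0∞)
      obtain ⟨B, hB, hxB, hBsub⟩ :=
        (TopologicalSpace.isBasis_countableBasis X).exists_subset_of_mem_open hq1 hopen
      have hP : P B q := ⟨ψ, fun y hy => hBsub hy⟩
      refine Set.mem_iUnion.mpr ⟨⟨⟨B, hB⟩, q⟩, ?_⟩
      simp only [F, dif_pos hP]
      exact lt_trans (hP.choose_spec x hxB) hq2
    have hcb : (TopologicalSpace.countableBasis X).Countable :=
      TopologicalSpace.countable_countableBasis X
    have : Countable (TopologicalSpace.countableBasis X) := hcb.to_subtype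
    have hmeagre : IsMeagre (⋃ p : (TopologicalSpace.countableBasis X) × ℚ, F p.1.val p.2) := by
      rw [IsMeagre, Set.compl_iUnion]
      exact countable_iInter_mem.mpr fun p => hFmeagre p.1.val p.2
    exact hmeagre.mono hsub
  · intro r
    have : {x : X | Ugr φ x < r} =
        ⋃ ψ : {ψ : X → ℝ≥0∞ // GradedOpen ψ ∧ LeAE φ ψ}, {x | ψ.val x < r} := by
      ext x
      simp [Ugr, iInf_lt_iff]
    rw [this]
    exact isOpen_iUnion fun ψ => ψ.2.1 r
  · intro ψ hψ hφ x
    exact iInf_le_of_le ⟨ψ, hψ, hφ⟩ le_rfl
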